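/- Let C be an A-coring, D a B-coring, and Γ = ((M,m),(N,n),η,ρ) a wide right Morita context in REM(Bim) from (D:B) to (C:A). Let M : Comod_C → Comod_D and N : Comod_D → Comod_C be the push-out functors X ↦ X ⊗_A M and Y ↦ Y ⊗_B N, and define natural transformations η̃ : N∘M ⟶ Id and ρ̃ : M∘N ⟶ Id as in the paper. Then for every right D-comodule Y, η̃_{N(Y)} = N(ρ̃_Y), and for every right C-comodule X, ρ̃_{M(X)} = M(η̃_X). Hence (M, N, η̃, ρ̃) is a wide right Morita context between Comod_C and Comod_D. -/
import Mathlib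


/-!
STATEMENT 13: the compatibility conditions η̃_{N(Y)} = N(ρ̃_Y) and
ρ̃_{M(X)} = M(η̃_X) of the induced wide right Morita context between the
categories of right comodules.  As in STATEMENTS 10–12, `REM(Bim)` is
formalized as the Eilenberg–Moore bicategory of comonads in an arbitrary
bicategory `𝔅`; right comodules are 1-cells with a coaction, the push-out
functors `𝓜 : X ↦ X ≫ M` and `𝓝 : Y ↦ Y ≫ N` act by composition, and the
equalities hold up to the canonical associator 2-cells.  Together with the
naturality of η̃ and ρ̃ this says that (𝓜, 𝓝, η̃, ρ̃) is a wide right Morita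
context between the comodule categories in the sense of
Castaño Iglesias–Gómez-Torrecillas.
-/

open CategoryTheory Bicategory


theorem aux {𝔅 : Type*} [Bicategory 𝔅] {a b z' : 𝔅}
    {C : a ⟶ a} {D : b ⟶ b} {M : a ⟶ b} {N : b ⟶ a}
    (n : D ≫ N ⟶ N ≫ C) (η : C ≫ (M ≫ N) ⟶ 𝟙 a) (ρ : D ≫ (N ≫ M) ⟶ 𝟙 b)
    (hII2 : (ρ ▷ N) ≫ (λ_ N).hom =
      (α_ D (N ≫ M) N).hom ≫ (D ◁ (α_ N M N).hom) ≫ (α_ D N (M ≫ N)).inv ≫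
        (n ▷ (M ≫ N)) ≫ (α_ N C (M ≫ N)).hom ≫ (N ◁ η) ≫ (ρ_ N).hom)
    (Y : z' ⟶ b) (ry : Y ⟶ Y ≫ D) :
    (((ry ▷ N) ≫ (α_ Y D N).hom ≫ (Y ◁ n) ≫ (α_ Y N C).inv) ▷ (M ≫ N)) ≫
        (α_ (Y ≫ N) C (M ≫ N)).hom ≫ ((Y ≫ N) ◁ η) ≫ (ρ_ (Y ≫ N)).hom =
      (α_ Y N (M ≫ N)).hom ≫ (Y ◁ (α_ N M N).inv) ≫ (α_ Y (N ≫ M) N).inv ≫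
        (((ry ▷ (N ≫ M)) ≫ (α_ Y D (N ≫ M)).hom ≫ (Y ◁ ρ) ≫ (ρ_ Y).hom) ▷ N) := by
  have e1 : (((ry ▷ N) ≫ (α_ Y D N).hom ≫ (Y ◁ n) ≫ (α_ Y N C).inv) ▷ (M ≫ N)) ≫
        (α_ (Y ≫ N) C (M ≫ N)).hom ≫ ((Y ≫ N) ◁ η) ≫ (ρ_ (Y ≫ N)).hom =
      (α_ Y N (M ≫ N)).hom ≫ (ry ▷ (N ≫ (M ≫ N))) ≫ (α_ Y D (N ≫ (M ≫ N))).hom ≫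
        (Y ◁ ((D ◁ (α_ N M N).inv) ≫ (α_ D (N ≫ M) N).inv ≫
          ((α_ D (N ≫ M) N).hom ≫ (D ◁ (α_ N M N).hom) ≫ (α_ D N (M ≫ N)).inv ≫
            (n ▷ (M ≫ N)) ≫ (α_ N C (M ≫ N)).hom ≫ (N ◁ η) ≫ (ρ_ N).hom))) := by
    bicategory
  have e2 : (α_ Y N (M ≫ N)).hom ≫ (Y ◁ (α_ N M N).inv) ≫ (α_ Y (N ≫ M) N).inv ≫
        (((ry ▷ (N ≫ M)) ≫ (α_ Y D (N ≫ M)).hom ≫ (Y ◁ ρ) ≫ (ρ_ Y).hom) ▷ N) =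
      (α_ Y N (M ≫ N)).hom ≫ (ry ▷ (N ≫ (M ≫ N))) ≫ (α_ Y D (N ≫ (M ≫ N))).hom ≫
        (Y ◁ ((D ◁ (α_ N M N).inv) ≫ (α_ D (N ≫ M) N).inv ≫
          ((ρ ▷ N) ≫ (λ_ N).hom))) := by
    bicategory
  rw [e1, e2, hII2]

/-- The composite `C ⊗ M ⊗ N ⟶ M ⊗ N ⊗ C` built from `m` and `n`. -/
def midmap {𝔅 : Type*} [Bicategory 𝔅] {a b : 𝔅} {C : a ⟶ a} {D : b ⟶ b}
    {M : a ⟶ b} {N : b ⟶ a} (m : C ≫ M ⟶ M ≫ D) (n : D ≫ N ⟶ N ≫ C) :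
    C ≫ (M ≫ N) ⟶ (M ≫ N) ≫ C :=
  (α_ C M N).inv ≫ (m ▷ N) ≫ (α_ M D N).hom ≫ (M ◁ n) ≫ (α_ M N C).inv

theorem wideMorita_stmt13 {𝔅 : Type*} [Bicategory 𝔅] {a b : 𝔅}
    -- the `A`-coring `C`
    (C : a ⟶ a) (ΔC : C ⟶ C ≫ C) (εC : C ⟶ 𝟙 a)
    (hC_coassoc : ΔC ≫ (ΔC ▷ C) ≫ (α_ C C C).hom = ΔC ≫ (C ◁ ΔC))
    (hC_counit_l : ΔC ≫ (εC ▷ C) ≫ (λ_ C).hom = 𝟙 C)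
    (hC_counit_r : ΔC ≫ (C ◁ εC) ≫ (ρ_ C).hom = 𝟙 C)
    -- the `B`-coring `D`
    (D : b ⟶ b) (ΔD : D ⟶ D ≫ D) (εD : D ⟶ 𝟙 b)
    (hD_coassoc : ΔD ≫ (ΔD ▷ D) ≫ (α_ D D D).hom = ΔD ≫ (D ◁ ΔD))
    (hD_counit_l : ΔD ≫ (εD ▷ D) ≫ (λ_ D).hom = 𝟙 D)
    (hD_counit_r : ΔD ≫ (D ◁ εD) ≫ (ρ_ D).hom = 𝟙 D)
    -- the 1-cells `(M, m)` and `(N, n)`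
    (M : a ⟶ b) (m : C ≫ M ⟶ M ≫ D)
    (hm1 : m ≫ (M ◁ εD) ≫ (ρ_ M).hom = (εC ▷ M) ≫ (λ_ M).hom)
    (hm2 : (ΔC ▷ M) ≫ (α_ C C M).hom ≫ (C ◁ m) ≫ (α_ C M D).inv ≫ (m ▷ D) ≫
      (α_ M D D).hom = m ≫ (M ◁ ΔD))
    (N : b ⟶ a) (n : D ≫ N ⟶ N ≫ C)
    (hn1 : n ≫ (N ◁ εC) ≫ (ρ_ N).hom = (εD ▷ N) ≫ (λ_ N).hom)
    (hn2 : (ΔD ▷ N) ≫ (α_ D D N).hom ≫ (D ◁ n) ≫ (α_ D N C).inv ≫ (n ▷ C) ≫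
      (α_ N C C).hom = n ≫ (N ◁ ΔC))
    -- the 2-cells `η` and `ρ` of the wide right Morita context
    (η : C ≫ (M ≫ N) ⟶ 𝟙 a) (ρ : D ≫ (N ≫ M) ⟶ 𝟙 b)
    (hI1 : (ΔC ▷ (M ≫ N)) ≫ (α_ C C (M ≫ N)).hom ≫ (C ◁ midmap m n) ≫
        (α_ C (M ≫ N) C).inv ≫ (η ▷ C) ≫ (λ_ C).hom =
      (ΔC ▷ (M ≫ N)) ≫ (α_ C C (M ≫ N)).hom ≫ (C ◁ η) ≫ (ρ_ C).hom)
    (hI2 : (ΔD ▷ (N ≫ M)) ≫ (α_ D D (N ≫ M)).hom ≫ (D ◁ midmap n m) ≫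
        (α_ D (N ≫ M) D).inv ≫ (ρ ▷ D) ≫ (λ_ D).hom =
      (ΔD ▷ (N ≫ M)) ≫ (α_ D D (N ≫ M)).hom ≫ (D ◁ ρ) ≫ (ρ_ D).hom)
    (hII1 : (η ▷ M) ≫ (λ_ M).hom =
      (α_ C (M ≫ N) M).hom ≫ (C ◁ (α_ M N M).hom) ≫ (α_ C M (N ≫ M)).inv ≫
        (m ▷ (N ≫ M)) ≫ (α_ M D (N ≫ M)).hom ≫ (M ◁ ρ) ≫ (ρ_ M).hom)
    (hII2 : (ρ ▷ N) ≫ (λ_ N).hom =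
      (α_ D (N ≫ M) N).hom ≫ (D ◁ (α_ N M N).hom) ≫ (α_ D N (M ≫ N)).inv ≫
        (n ▷ (M ≫ N)) ≫ (α_ N C (M ≫ N)).hom ≫ (N ◁ η) ≫ (ρ_ N).hom) :
    -- (a) for every right `D`-comodule `(Y, ρ^Y)`:  η̃_{𝓝(Y)} = 𝓝(ρ̃_Y)
    (∀ (z' : 𝔅) (Y : z' ⟶ b) (ry : Y ⟶ Y ≫ D),
      (ry ≫ (Y ◁ εD) ≫ (ρ_ Y).hom = 𝟙 Y) →
      (ry ≫ (ry ▷ D) ≫ (α_ Y D D).hom = ry ≫ (Y ◁ ΔD)) →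
      ((((ry ▷ N) ≫ (α_ Y D N).hom ≫ (Y ◁ n) ≫ (α_ Y N C).inv) ▷ (M ≫ N)) ≫
          (α_ (Y ≫ N) C (M ≫ N)).hom ≫ ((Y ≫ N) ◁ η) ≫ (ρ_ (Y ≫ N)).hom =
        (α_ Y N (M ≫ N)).hom ≫ (Y ◁ (α_ N M N).inv) ≫ (α_ Y (N ≫ M) N).inv ≫
          (((ry ▷ (N ≫ M)) ≫ (α_ Y D (N ≫ M)).hom ≫ (Y ◁ ρ) ≫ (ρ_ Y).hom) ▷ N))) ∧
    -- (b) for every right `C`-comodule `(X, ρ^X)`:  ρ̃_{𝓜(X)} = 𝓜(η̃_X)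
    (∀ (z : 𝔅) (X : z ⟶ a) (rx : X ⟶ X ≫ C),
      (rx ≫ (X ◁ εC) ≫ (ρ_ X).hom = 𝟙 X) →
      (rx ≫ (rx ▷ C) ≫ (α_ X C C).hom = rx ≫ (X ◁ ΔC)) →
      ((((rx ▷ M) ≫ (α_ X C M).hom ≫ (X ◁ m) ≫ (α_ X M D).inv) ▷ (N ≫ M)) ≫
          (α_ (X ≫ M) D (N ≫ M)).hom ≫ ((X ≫ M) ◁ ρ) ≫ (ρ_ (X ≫ M)).hom =
        (α_ X M (N ≫ M)).hom ≫ (X ◁ (α_ M N M).inv) ≫ (α_ X (M ≫ N) M).inv ≫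
          (((rx ▷ (M ≫ N)) ≫ (α_ X C (M ≫ N)).hom ≫ (X ◁ η) ≫ (ρ_ X).hom) ▷ M))) := by
  constructor
  · intro z' Y ry _ _
    exact aux n η ρ hII2 Y ry
  · intro z X rx _ _
    exact aux m ρ η hII1 X rx
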